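/- Let (G_α)_{α∈addr(t)} be a concrete evaluation of a tree t into a graph G under union and extension operations satisfying (R1) and (R2). Then for every address α, the node set V_α of G_α is contained in the set of nodes reachable in G from its port sequence port_α (Claim 2 of the Reachability Lemma). -/

import Mathlib

structure LabGraph (ν Ld Lb : Type) where
  V : Set ν
  E : Set (ν × Lb × ν)
  lab : ν → Ld
  port : List ν

def LabGraph.IsEmptyGraph {ν Ld Lb : Type} (G : LabGraph ν Ld Lb) : Prop :=
  G.V = ∅ ∧ G.E = ∅ ∧ G.port = []

def CloneWitness {ν Ld Lb : Type} (G : LabGraph ν Ld Lb) (C : Set ν) (Cv : ν → Set ν)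
    (G' : LabGraph ν Ld Lb) : Prop :=
  (∀ v, v ∈ G.V → v ∉ C → Cv v = {v}) ∧
  (∀ u v, u ∈ G.V → v ∈ G.V → u ≠ v → Disjoint (Cv u) (Cv v)) ∧
  G'.V = (⋃ v ∈ G.V, Cv v) ∧
  G'.E = {e | ∃ u ℓ w, (u, ℓ, w) ∈ G.E ∧ e.1 ∈ Cv u ∧ e.2.1 = ℓ ∧ e.2.2 ∈ Cv w} ∧
  (∀ v, v ∈ G.V → ∀ v' ∈ Cv v, G'.lab v' = G.lab v) ∧
  G'.port = G.port

def Clone {ν Ld Lb : Type} (G : LabGraph ν Ld Lb) (C : Set ν) : Set (LabGraph ν Ld Lb) :=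
  {G' | ∃ Cv, CloneWitness G C Cv G'}

structure ExpOp (ν Ld Lb : Type) where
  V : Set ν
  E : Set (ν × Lb × ν)
  lab : ν → Ld
  port : List ν
  dock : List ν
  C : Set ν
  E_sub : ∀ e ∈ E, e.1 ∈ V ∧ e.2.2 ∈ V
  port_nodup : port.Nodup
  dock_nodup : dock.Nodup
  port_sub : ∀ v ∈ port, v ∈ V
  dock_sub : ∀ v ∈ dock, v ∈ V
  C_sub : C ⊆ V \ ({v | v ∈ port} ∪ {v | v ∈ dock})

namespace ExpOp
variable {ν Ld Lb : Type}

def und (Φ : ExpOp ν Ld Lb) : LabGraph ν Ld Lb := ⟨Φ.V, Φ.E, Φ.lab, Φ.port⟩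

def NEW (Φ : ExpOp ν Ld Lb) : Set ν := {v | v ∈ Φ.port} \ {v | v ∈ Φ.dock}

def CONT (Φ : ExpOp ν Ld Lb) : Set ν := Φ.V \ ({v | v ∈ Φ.port} ∪ {v | v ∈ Φ.dock})

/-- (R1): every edge source lies in NEW. -/
def R1 (Φ : ExpOp ν Ld Lb) : Prop := ∀ e ∈ Φ.E, e.1 ∈ Φ.NEW

/-- (R2): every dock node that is not a port is the target of some edge. -/
def R2 (Φ : ExpOp ν Ld Lb) : Prop := ∀ v ∈ Φ.dock, v ∉ Φ.port → ∃ e ∈ Φ.E, e.2.2 = v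

/-- (R3): no isolated context nodes. -/
def R3 (Φ : ExpOp ν Ld Lb) : Prop := ∀ v ∈ Φ.V, v ∉ Φ.port → ∃ e ∈ Φ.E, e.2.2 = v

end ExpOp

def Apply {ν Ld Lb : Type} (Φ : ExpOp ν Ld Lb) (G H : LabGraph ν Ld Lb) : Prop :=
  G.port.length = Φ.dock.length ∧
  ∃ (Cv : ν → Set ν) (G'' : LabGraph ν Ld Lb) (μ : ν → ν),
    CloneWitness Φ.und Φ.C Cv G'' ∧
    Set.InjOn μ G''.V ∧
    (∀ v ∈ Φ.NEW, μ v ∉ G.V) ∧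
    Φ.dock.map μ = G.port ∧
    (∀ v ∈ Φ.CONT, ∀ v' ∈ Cv v, μ v' ∈ G.V ∧ μ v' ∉ {x | x ∈ G.port} ∧
      G.lab (μ v') = Φ.lab v) ∧
    H.V = G.V ∪ μ '' G''.V ∧
    H.E = G.E ∪ {e | ∃ e' ∈ G''.E, e = (μ e'.1, e'.2.1, μ e'.2.2)} ∧
    (∀ v ∈ G.V, H.lab v = G.lab v) ∧
    (∀ v' ∈ G''.V, μ v' ∉ G.V → H.lab (μ v') = G''.lab v') ∧
    H.port = G''.port.map μ

def UnionOf {ν Ld Lb : Type} (G₁ G₂ H : LabGraph ν Ld Lb) : Prop :=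
  Disjoint G₁.V G₂.V ∧
  H.V = G₁.V ∪ G₂.V ∧
  H.E = G₁.E ∪ G₂.E ∧
  (∀ v ∈ G₁.V, H.lab v = G₁.lab v) ∧
  (∀ v ∈ G₂.V, H.lab v = G₂.lab v) ∧
  H.port = G₁.port ++ G₂.port

def Subgraph {ν Ld Lb : Type} (G' G : LabGraph ν Ld Lb) : Prop :=
  G'.V ⊆ G.V ∧ G'.E ⊆ G.E ∧ (∀ v ∈ G'.V, G'.lab v = G.lab v)

def LabGraph.step {ν Ld Lb : Type} (G : LabGraph ν Ld Lb) (u v : ν) : Prop :=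
  ∃ ℓ, (u, ℓ, v) ∈ G.E

/-- Nodes reachable in `G` by directed paths from the nodes occurring in `p`. -/
def LabGraph.reachSet {ν Ld Lb : Type} (G : LabGraph ν Ld Lb) (p : List ν) : Set ν :=
  {v | ∃ u ∈ p, Relation.ReflTransGen G.step u v}

/-- `G↓p`: the subgraph of `G` induced by the nodes reachable from `p`, with port sequence `p`. -/
def LabGraph.restrictReach {ν Ld Lb : Type} (G : LabGraph ν Ld Lb) (p : List ν) : LabGraph ν Ld Lb :=
  ⟨G.reachSet p, {e | e ∈ G.E ∧ e.1 ∈ G.reachSet p ∧ e.2.2 ∈ G.reachSet p}, G.lab, p⟩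

inductive OpTree (ν Ld Lb : Type) : Type where
  | phi : OpTree ν Ld Lb
  | ext : ExpOp ν Ld Lb → OpTree ν Ld Lb → OpTree ν Ld Lb
  | union : OpTree ν Ld Lb → OpTree ν Ld Lb → OpTree ν Ld Lb

namespace OpTree
variable {ν Ld Lb : Type}

def subtree : OpTree ν Ld Lb → List ℕ → Option (OpTree ν Ld Lb)
  | t, [] => some t
  | .ext _ t, 1 :: α => t.subtree α
  | .union t₁ _, 1 :: α => t₁.subtree α
  | .union _ t₂, 2 :: α => t₂.subtree α
  | _, _ => none

def Addr (t : OpTree ν Ld Lb) (α : List ℕ) : Prop := (t.subtree α).isSome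

def ops : OpTree ν Ld Lb → Set (ExpOp ν Ld Lb)
  | .phi => ∅
  | .ext Φ t => insert Φ t.ops
  | .union t₁ t₂ => t₁.ops ∪ t₂.ops

end OpTree

/-- A concrete evaluation of the tree `t` into the graph `G`: a family of subgraphs of `G`
(indexed by Gorn addresses, with no renaming of nodes) with `ev [] = G`, respecting the
operations labelling `t`. -/
def ConcreteEval {ν Ld Lb : Type} (t : OpTree ν Ld Lb) (G : LabGraph ν Ld Lb)
    (ev : List ℕ → LabGraph ν Ld Lb) : Prop :=
  ev [] = G ∧
  ∀ α, t.Addr α →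
    Subgraph (ev α) G ∧
    (t.subtree α = some .phi → (ev α).IsEmptyGraph) ∧
    (∀ Φ t', t.subtree α = some (.ext Φ t') → Apply Φ (ev (α ++ [1])) (ev α)) ∧
    (∀ t₁ t₂, t.subtree α = some (.union t₁ t₂) →
      UnionOf (ev (α ++ [1])) (ev (α ++ [2])) (ev α))

theorem subtree_append {ν Ld Lb : Type} (α : List ℕ) (t s : OpTree ν Ld Lb) (β : List ℕ)
    (h : t.subtree α = some s) : t.subtree (α ++ β) = s.subtree β := by
  induction α generalizing t with
  | nil => simp [OpTree.subtree] at h; subst h; rfl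
  | cons i α ih =>
    match t, i with
    | .ext Φ t, 1 => exact ih t h
    | .phi, _ => simp [OpTree.subtree] at h
    | .ext _ _, 0 => simp [OpTree.subtree] at h
    | .ext _ _, _+2 => simp [OpTree.subtree] at h
    | .union _ _, 0 => simp [OpTree.subtree] at h
    | .union _ _, _+3 => simp [OpTree.subtree] at h
    | .union t₁ t₂, 1 => exact ih t₁ h
    | .union t₁ t₂, 2 => exact ih t₂ h

theorem ops_subtree {ν Ld Lb : Type} (α : List ℕ) (t s : OpTree ν Ld Lb)
    (h : t.subtree α = some s) : s.ops ⊆ t.ops := by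
  induction α generalizing t with
  | nil => simp [OpTree.subtree] at h; subst h; exact subset_rfl
  | cons i α ih =>
    match t, i with
    | .ext Φ t, 1 => exact (ih t h).trans (Set.subset_insert _ _)
    | .phi, _ => simp [OpTree.subtree] at h
    | .ext _ _, 0 => simp [OpTree.subtree] at h
    | .ext _ _, _+2 => simp [OpTree.subtree] at h
    | .union _ _, 0 => simp [OpTree.subtree] at h
    | .union _ _, _+3 => simp [OpTree.subtree] at h
    | .union t₁ t₂, 1 => exact (ih t₁ h).trans Set.subset_union_left
    | .union t₁ t₂, 2 => exact (ih t₂ h).trans Set.subset_union_right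

theorem reach_mono {ν Ld Lb : Type} (G : LabGraph ν Ld Lb) {p q : List ν}
    (h : ∀ u ∈ p, u ∈ G.reachSet q) : G.reachSet p ⊆ G.reachSet q := by
  rintro v ⟨u, hu, hr⟩
  obtain ⟨u0, hu0, hr0⟩ := h u hu
  exact ⟨u0, hu0, hr0.trans hr⟩

theorem main_aux {ν Ld Lb : Type} (t : OpTree ν Ld Lb) (G : LabGraph ν Ld Lb)
    (ev : List ℕ → LabGraph ν Ld Lb) (hops : ∀ Φ ∈ t.ops, Φ.R1 ∧ Φ.R2)
    (h : ConcreteEval t G ev) :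
    ∀ (s : OpTree ν Ld Lb) (α : List ℕ), t.subtree α = some s →
      (ev α).V ⊆ G.reachSet (ev α).port := by
  intro s
  induction s with
  | phi =>
    intro α hα
    have hemp := (h.2 α (by simp [OpTree.Addr, hα])).2.1 hα
    rw [hemp.1]
    exact Set.empty_subset _
  | ext Φ t' ih =>
    intro α hα
    have hAddr : t.Addr α := by simp [OpTree.Addr, hα]
    have hc : t.subtree (α ++ [1]) = some t' := by rw [subtree_append α t _ [1] hα]; simp [OpTree.subtree]
    have hIH := ih (α ++ [1]) hc
    have hΦ : Φ ∈ t.ops := ops_subtree α t _ hα (Set.mem_insert _ _)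
    obtain ⟨hR1, hR2⟩ := hops Φ hΦ
    have happ := (h.2 α hAddr).2.2.1 Φ t' hα
    have hsubH := (h.2 α hAddr).1
    obtain ⟨hlen, Cv, G'', μ, ⟨hCv1, hCvd, hG''V, hG''E, hG''lab, hG''port⟩,
      hinj, hnew, hdockμ, hcont, hV, hE, hlab1, hlab2, hport⟩ := happ
    have hnotC : ∀ v, (v ∈ Φ.port ∨ v ∈ Φ.dock) → v ∉ Φ.C := by
      intro v hv hC
      exact (Φ.C_sub hC).2 (by rcases hv with h' | h' <;> [exact Or.inl h'; exact Or.inr h'])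
    have hedge : ∀ a ℓ b a' b', (a, ℓ, b) ∈ Φ.E → a' ∈ Cv a → b' ∈ Cv b →
        (μ a', ℓ, μ b') ∈ G.E := by
      intro a ℓ b a' b' he ha hb
      have hG'' : (a', ℓ, b') ∈ G''.E := by rw [hG''E]; exact ⟨a, ℓ, b, he, ha, rfl, hb⟩
      have : (μ a', ℓ, μ b') ∈ (ev α).E := by
        rw [hE]; exact Or.inr ⟨(a', ℓ, b'), hG'', rfl⟩
      exact hsubH.2.1 this
    have hportmem : ∀ u ∈ Φ.port, μ u ∈ (ev α).port := by
      intro u hu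
      rw [hport, hG''port]
      exact List.mem_map_of_mem (f := μ) hu
    have hdockreach : ∀ d ∈ Φ.dock, μ d ∈ G.reachSet (ev α).port := by
      intro d hd
      by_cases hdp : d ∈ Φ.port
      · exact ⟨μ d, hportmem d hdp, Relation.ReflTransGen.refl⟩
      · obtain ⟨⟨a, ℓ, b⟩, he, het⟩ := hR2 d hd hdp
        simp only at het
        rw [het] at he
        have haN : a ∈ Φ.NEW := hR1 _ he
        have haP : a ∈ Φ.port := haN.1
        have hCa : Cv a = {a} := hCv1 a (Φ.port_sub a haP) (hnotC a (Or.inl haP))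
        have hCd : Cv d = {d} := hCv1 d (Φ.dock_sub d hd) (hnotC d (Or.inr hd))
        have hedge' := hedge a ℓ d a d he (by rw [hCa]; rfl) (by rw [hCd]; rfl)
        exact ⟨μ a, hportmem a haP, Relation.ReflTransGen.single ⟨ℓ, hedge'⟩⟩
    have hChildReach : (ev (α ++ [1])).V ⊆ G.reachSet (ev α).port := by
      refine hIH.trans (reach_mono G ?_)
      intro u hu
      rw [← hdockμ] at hu
      obtain ⟨d, hd, rfl⟩ := List.mem_map.1 hu
      exact hdockreach d hd
    intro v hv
    rw [hV] at hv
    rcases hv with hv | ⟨v', hv', rfl⟩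
    · exact hChildReach hv
    · rw [hG''V] at hv'
      simp only [Set.mem_iUnion] at hv'
      obtain ⟨w, hw, hvw⟩ := hv'
      by_cases hwp : w ∈ Φ.port
      · have hCw : Cv w = {w} := hCv1 w hw (hnotC w (Or.inl hwp))
        rw [hCw] at hvw
        rw [Set.mem_singleton_iff.1 hvw]
        exact ⟨μ w, hportmem w hwp, Relation.ReflTransGen.refl⟩
      · by_cases hwd : w ∈ Φ.dock
        · have hCw : Cv w = {w} := hCv1 w hw (hnotC w (Or.inr hwd))
          rw [hCw] at hvw
          rw [Set.mem_singleton_iff.1 hvw]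
          exact hdockreach w hwd
        · have hwC : w ∈ Φ.CONT := ⟨hw, by simp [hwp, hwd]⟩
          exact hChildReach (hcont w hwC v' hvw).1
  | union t₁ t₂ ih₁ ih₂ =>
    intro α hα
    have hAddr : t.Addr α := by simp [OpTree.Addr, hα]
    have hc1 : t.subtree (α ++ [1]) = some t₁ := by rw [subtree_append α t _ [1] hα]; simp [OpTree.subtree]
    have hc2 : t.subtree (α ++ [2]) = some t₂ := by rw [subtree_append α t _ [2] hα]; simp [OpTree.subtree]
    obtain ⟨_, hV, _, _, _, hport⟩ := (h.2 α hAddr).2.2.2 t₁ t₂ hα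
    intro v hv
    rw [hV] at hv
    rcases hv with hv | hv
    · obtain ⟨u, hu, hr⟩ := ih₁ (α ++ [1]) hc1 hv
      exact ⟨u, by rw [hport]; exact List.mem_append_left _ hu, hr⟩
    · obtain ⟨u, hu, hr⟩ := ih₂ (α ++ [2]) hc2 hv
      exact ⟨u, by rw [hport]; exact List.mem_append_right _ hu, hr⟩

/-- Claim 2 of the Reachability Lemma: in a concrete evaluation of `t` into
`G`, the node set `V_α` is contained in the set of nodes reachable in `G` from `port_α`. -/
theorem nodes_reachable_from_ports {ν Ld Lb : Type} (t : OpTree ν Ld Lb)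
    (G : LabGraph ν Ld Lb) (ev : List ℕ → LabGraph ν Ld Lb)
    (hops : ∀ Φ ∈ t.ops, Φ.R1 ∧ Φ.R2)
    (h : ConcreteEval t G ev) :
    ∀ α, t.Addr α → (ev α).V ⊆ G.reachSet (ev α).port := by
  intro α hα
  obtain ⟨s, hs⟩ := Option.isSome_iff_exists.1 hα
  exact main_aux t G ev hops h s α hs
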